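/- Let g: [0,∞) → ℝ be continuous, strictly decreasing, strictly convex on (0,∞), with g(0) = β > 0 and lim_{x→∞} g(x) = 0, and let y* > 0. If y* β < 1, then the equation 1 - x = y* g(x) has exactly one solution in (0,1). -/

import Mathlib

/-- If `g` is continuous and strictly decreasing on `[0,∞)`, strictly convex on `(0,∞)`,
`g 0 = β > 0`, `g → 0` at infinity, and `y* > 0` with `y* β < 1`, then
`1 - x = y* g x` has exactly one solution in `(0,1)`. -/
theorem stmt_7 (g : ℝ → ℝ) (β ystar : ℝ)
    (hcont : ContinuousOn g (Set.Ici 0))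
    (hanti : StrictAntiOn g (Set.Ici 0))
    (hconv : StrictConvexOn ℝ (Set.Ioi 0) g)
    (h0 : g 0 = β) (hβ : 0 < β)
    (hlim : Filter.Tendsto g Filter.atTop (nhds 0))
    (hy : 0 < ystar) (hyβ : ystar * β < 1) :
    ∃! x : ℝ, x ∈ Set.Ioo (0:ℝ) 1 ∧ 1 - x = ystar * g x := by
  set H : ℝ → ℝ := fun x => 1 - x - ystar * g x with hH
  have gpos : ∀ x, 0 ≤ x → 0 < g x := by
    intro x hx
    have h1 : (0:ℝ) ≤ g (x + 1) := by
      refine le_of_tendsto hlim ?_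
      filter_upwards [Filter.eventually_ge_atTop (x + 2)] with t ht
      exact (hanti (Set.mem_Ici.2 (by linarith)) (Set.mem_Ici.2 (by linarith))
        (by linarith)).le
    have h2 := hanti (Set.mem_Ici.2 hx) (Set.mem_Ici.2 (by linarith : (0:ℝ) ≤ x + 1))
      (by linarith)
    linarith
  have H0 : 0 < H 0 := by simp only [hH, h0]; simp; linarith
  have H1 : H 1 < 0 := by
    have hg1 := mul_pos hy (gpos 1 (by norm_num))
    simp only [hH]; linarith
  have hcontH : ContinuousOn H (Set.Icc 0 1) := by
    apply ContinuousOn.sub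
    · exact (continuous_const.sub continuous_id).continuousOn
    · exact continuousOn_const.mul (hcont.mono (fun x hx => hx.1))
  -- key uniqueness lemma: no two distinct solutions
  have key : ∀ a b : ℝ, a ∈ Set.Ioo (0:ℝ) 1 → b ∈ Set.Ioo (0:ℝ) 1 →
      1 - a = ystar * g a → 1 - b = ystar * g b → a < b → False := by
    intro a b ha hb hea heb hab
    -- find ε ∈ (0, a) with H ε > 0
    have hcw : ContinuousWithinAt H (Set.Ici 0) 0 := by
      apply ContinuousWithinAt.sub
      · exact (continuous_const.sub continuous_id).continuousWithinAt
      · exact (continuousWithinAt_const).mul (hcont 0 (Set.mem_Ici.2 le_rfl))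
    have hev : ∀ᶠ z in nhdsWithin 0 (Set.Ioi (0:ℝ)), 0 < H z :=
      (nhdsWithin_mono 0 Set.Ioi_subset_Ici_self) (hcw (Ioi_mem_nhds H0))
    have hlt : ∀ᶠ z in nhdsWithin 0 (Set.Ioi (0:ℝ)), z < a :=
      eventually_nhdsWithin_of_eventually_nhds (eventually_lt_nhds ha.1)
    have hmem : ∀ᶠ z in nhdsWithin 0 (Set.Ioi (0:ℝ)), z ∈ Set.Ioi (0:ℝ) :=
      eventually_mem_nhdsWithin
    obtain ⟨ε, hHε, hεa, hεmem⟩ := (hev.and (hlt.and hmem)).exists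
    have hε0 : 0 < ε := Set.mem_Ioi.1 hεmem
    have hbε : 0 < b - ε := by linarith
    set lam : ℝ := (b - a) / (b - ε) with hlam
    set mu : ℝ := (a - ε) / (b - ε) with hmu
    have hlam0 : 0 < lam := div_pos (by linarith) hbε
    have hmu0 : 0 < mu := div_pos (by linarith) hbε
    have hsum : lam + mu = 1 := by
      rw [hlam, hmu, ← add_div, div_eq_one_iff_eq hbε.ne']; ring
    have hcomb : lam • ε + mu • b = a := by
      simp only [smul_eq_mul, hlam, hmu]
      field_simp
      ring
    have hgc := hconv.2 (Set.mem_Ioi.2 hε0) (Set.mem_Ioi.2 hb.1)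
      (by intro h; rw [h] at hεa; linarith) hlam0 hmu0 hsum
    rw [hcomb] at hgc
    simp only [smul_eq_mul] at hgc
    -- ystar * g a < lam * (ystar * g ε) + mu * (ystar * g b)
    have h1 : ystar * g a < lam * (ystar * g ε) + mu * (ystar * g b) := by
      have := mul_lt_mul_of_pos_left hgc hy
      nlinarith
    have h2 : ystar * g ε < 1 - ε := by simp only [hH] at hHε; linarith
    have h3 : ystar * g b = 1 - b := heb.symm
    have h4 : lam * (ystar * g ε) < lam * (1 - ε) := by
      exact mul_lt_mul_of_pos_left h2 hlam0
    have h5 : lam * (1 - ε) + mu * (1 - b) = 1 - a := by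
      have : lam * ε + mu * b = a := by simpa [smul_eq_mul] using hcomb
      nlinarith
    rw [hea] at h5
    nlinarith
  obtain ⟨x, hx, hxeq⟩ := intermediate_value_Ioo' (by norm_num : (0:ℝ) ≤ 1) hcontH
    (show (0:ℝ) ∈ Set.Ioo (H 1) (H 0) from ⟨H1, H0⟩)
  have hxsol : 1 - x = ystar * g x := by simp only [hH] at hxeq; linarith
  refine ⟨x, ⟨hx, hxsol⟩, ?_⟩
  rintro y ⟨hy1, hy2⟩
  rcases lt_trichotomy y x with h | h | h
  · exact absurd (key y x hy1 hx hy2 hxsol h) id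
  · exact h
  · exact absurd (key x y hx hy1 hxsol hy2 h) id
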